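/- arXiv:1904.11646 — 4 statements merged into one kernel-verified Lean document; each statement's English description precedes it below -/
import Mathlib

section
/- If the upper triangular subalgebras Ã₁,…,Ãₙ are free with respect to Ẽ over B̃, then A₁,…,Aₙ are infinitesimally free with respect to (E, E'). -/
lemma prod_triangular {A : Type*} [Ring A] : ∀ {k : ℕ} (a a' : Fin k → A),
    (List.ofFn fun j => (!![a j, a' j; 0, a j] : Matrix (Fin 2) (Fin 2) A)).prod =
    !![(List.ofFn a).prod,
       ∑ j : Fin k, ((List.ofFn a).take j).prod * a' j * ((List.ofFn a).drop (j + 1)).prod;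
       0, (List.ofFn a).prod] := by
  intro k
  induction k with
  | zero => intro a a'; simp [Matrix.one_fin_two]
  | succ k ih =>
    intro a a'
    rw [List.ofFn_succ, List.ofFn_succ (f := a), List.prod_cons, List.prod_cons,
      ih (fun i => a i.succ) (fun i => a' i.succ)]
    have hs : (∑ j : Fin (k+1), (List.take (j:ℕ) (a 0 :: List.ofFn fun i => a i.succ)).prod
          * a' j * (List.drop ((j:ℕ)+1) (a 0 :: List.ofFn fun i => a i.succ)).prod)
        = a 0 * (∑ j : Fin k, (List.take (j:ℕ) (List.ofFn fun i => a i.succ)).prod * a' j.succ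
            * (List.drop ((j:ℕ)+1) (List.ofFn fun i => a i.succ)).prod)
          + a' 0 * (List.ofFn fun i => a i.succ).prod := by
      rw [Fin.sum_univ_succ, Finset.mul_sum]
      simp only [Fin.val_zero, List.take_zero, List.prod_nil, one_mul, Fin.val_succ,
        List.take_succ_cons, List.prod_cons, List.drop_succ_cons, List.drop_zero,
        zero_add, mul_assoc]
      rw [add_comm]
    rw [hs, Matrix.mul_fin_two]
    congr 1 <;> simp



/-- The upper triangular conditional expectation `Ẽ` read off from matrix entries. -/
def Et {A : Type*} [Ring A] [Algebra ℂ A] (E E' : A →ₗ[ℂ] A)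
    (M : Matrix (Fin 2) (Fin 2) A) : Matrix (Fin 2) (Fin 2) A :=
  !![E (M 0 0), E (M 0 1) + E' (M 0 0); 0, E (M 0 0)]

/-- Infinitesimal freeness of the subalgebras `𝒜 i` with respect to `(E, E')`. -/
def InfinitesimallyFree {A : Type*} [Ring A] [Algebra ℂ A] (E E' : A →ₗ[ℂ] A)
    {n : ℕ} (𝒜 : Fin n → Subalgebra ℂ A) : Prop :=
  ∀ (m : ℕ) (i : Fin (m + 1) → Fin n),
    (∀ j : Fin m, i j.castSucc ≠ i j.succ) →
    ∀ a : Fin (m + 1) → A, (∀ j, a j ∈ 𝒜 (i j)) → (∀ j, E (a j) = 0) →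
      E (List.ofFn a).prod = 0 ∧
      E' (List.ofFn a).prod =
        ∑ j : Fin (m + 1),
          E (((List.ofFn a).take j).prod * E' (a j) * ((List.ofFn a).drop (j + 1)).prod)

/-- Freeness of the upper triangular subalgebras `Ãᵢ` with respect to `Ẽ` over `B̃`. -/
def TildeFree {A : Type*} [Ring A] [Algebra ℂ A] (E E' : A →ₗ[ℂ] A)
    {n : ℕ} (𝒜 : Fin n → Subalgebra ℂ A) : Prop :=
  ∀ (m : ℕ) (i : Fin (m + 1) → Fin n),
    (∀ j : Fin m, i j.castSucc ≠ i j.succ) →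
    ∀ a a' : Fin (m + 1) → A,
      (∀ j, a j ∈ 𝒜 (i j)) → (∀ j, a' j ∈ 𝒜 (i j)) →
      (∀ j, Et E E' (!![a j, a' j; 0, a j]) = 0) →
      Et E E'
        (List.ofFn fun j => (!![a j, a' j; 0, a j] : Matrix (Fin 2) (Fin 2) A)).prod = 0

/-- If the upper triangular subalgebras are free w.r.t. Ẽ over B̃ then the subalgebras are infinitesimally free w.r.t. (E,E'). -/
theorem tilde_free_implies_inf_free {A : Type*} [Ring A] [Algebra ℂ A]
    (B : Subalgebra ℂ A) (E E' : A →ₗ[ℂ] A)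
    (hE_mem : ∀ a, E a ∈ B) (hE'_mem : ∀ a, E' a ∈ B)
    (hE_id : ∀ b ∈ B, E b = b)
    (hE_bimod : ∀ b₁ ∈ B, ∀ b₂ ∈ B, ∀ a, E (b₁ * a * b₂) = b₁ * E a * b₂)
    (hE'_one : E' 1 = 0)
    (hE'_bimod : ∀ b₁ ∈ B, ∀ b₂ ∈ B, ∀ a, E' (b₁ * a * b₂) = b₁ * E' a * b₂)
    {n : ℕ} (𝒜 : Fin n → Subalgebra ℂ A) (h𝒜 : ∀ i, B ≤ 𝒜 i) :
    TildeFree E E' 𝒜 → InfinitesimallyFree E E' 𝒜 := by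
  intro hT m i hij a hmem hE0
  have hmem' : ∀ j, -E' (a j) ∈ 𝒜 (i j) := fun j => neg_mem (h𝒜 (i j) (hE'_mem (a j)))
  have hEt0 : ∀ j, Et E E' (!![a j, -E' (a j); 0, a j]) = 0 := by
    intro j
    ext r c
    fin_cases r <;> fin_cases c <;>
      simp [Et, hE0 j, map_neg, hE_id _ (hE'_mem (a j))]
  have H := hT m i hij a (fun j => -E' (a j)) hmem hmem' hEt0
  rw [prod_triangular] at H
  have h00 : E (List.ofFn a).prod = 0 := by
    have := congrFun (congrFun H 0) 0
    simpa [Et] using this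
  have h01 : E (∑ j : Fin (m+1), ((List.ofFn a).take j).prod * (-E' (a j)) *
        ((List.ofFn a).drop (j+1)).prod) + E' (List.ofFn a).prod = 0 := by
    have := congrFun (congrFun H 0) 1
    simpa [Et] using this
  refine ⟨h00, ?_⟩
  have h2 := eq_neg_of_add_eq_zero_right h01
  rw [h2, map_sum, ← Finset.sum_neg_distrib]
  exact Finset.sum_congr rfl fun j _ => by rw [mul_neg, neg_mul, map_neg, neg_neg]
end

section
/- Subalgebras A₁,…,Aₙ containing B are infinitesimally free with respect to (E, E') if and only if Ã₁,…,Ãₙ are free with respect to Ẽ over B̃. -/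
namespace InfFreeAux
variable {A : Type*} [Ring A]

def T (p : A × A) : Matrix (Fin 2) (Fin 2) A := !![p.1, p.2; 0, p.1]

def Smix : List (A × A) → A
  | [] => 0
  | p :: l => p.2 * (l.map Prod.fst).prod + p.1 * Smix l

lemma T_mul (p q : A × A) : T p * T q = T (p.1 * q.1, p.1 * q.2 + p.2 * q.1) := by
  simp [T, Matrix.mul_fin_two]

lemma prod_T (l : List (A × A)) :
    (l.map T).prod = T ((l.map Prod.fst).prod, Smix l) := by
  induction l with
  | nil => simp [T, Smix, Matrix.one_fin_two]
  | cons p l ih =>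
      simp only [List.map_cons, List.prod_cons, ih, T_mul, Smix]
      rw [add_comm]

lemma Smix_ofFn : ∀ (m : ℕ) (a a' : Fin (m+1) → A),
    Smix (List.ofFn fun j => (a j, a' j)) =
      ∑ j : Fin (m+1), ((List.ofFn a).take j).prod * a' j * ((List.ofFn a).drop (j + 1)).prod := by
  intro m
  induction m with
  | zero => intro a a'; simp [Smix, List.ofFn_succ]
  | succ m ih =>
      intro a a'
      rw [show (List.ofFn fun j => (a j, a' j)) = (a 0, a' 0) :: List.ofFn (fun i => (a i.succ, a' i.succ)) from List.ofFn_succ,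
        show (List.ofFn a) = a 0 :: List.ofFn (fun i => a i.succ) from List.ofFn_succ,
        Fin.sum_univ_succ]
      simp only [Smix, List.map_ofFn, Function.comp]
      rw [ih (fun j => a j.succ) (fun j => a' j.succ)]
      simp [List.take_succ_cons, List.drop_succ_cons, Fin.val_succ, Finset.mul_sum, mul_assoc]

lemma prod_update (m : ℕ) (a : Fin (m+1) → A) (j : Fin (m+1)) (c : A) :
    (List.ofFn (Function.update a j c)).prod
      = ((List.ofFn a).take j).prod * c * ((List.ofFn a).drop (j + 1)).prod := by
  have h : List.ofFn (Function.update a j c) = (List.ofFn a).set j c := by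
    apply List.ext_getElem
    · simp
    · intro k h1 h2
      simp only [List.getElem_ofFn, List.getElem_set, List.getElem_ofFn,
        Function.update_apply, Fin.ext_iff]
      by_cases hk : k = (j : ℕ) <;> simp [hk, eq_comm]
  rw [h, List.prod_set]
  simp [j.isLt]

lemma prod_T_ofFn (m : ℕ) (a a' : Fin (m+1) → A) :
    (List.ofFn fun j => (!![a j, a' j; 0, a j] : Matrix (Fin 2) (Fin 2) A)).prod
      = !![(List.ofFn a).prod,
           ∑ j : Fin (m+1), ((List.ofFn a).take j).prod * a' j * ((List.ofFn a).drop (j+1)).prod;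
           0, (List.ofFn a).prod] := by
  have h1 : (List.ofFn fun j => (!![a j, a' j; 0, a j] : Matrix (Fin 2) (Fin 2) A))
      = ((List.ofFn fun j => (a j, a' j)).map T) := by
    rw [List.map_ofFn]; rfl
  rw [h1, prod_T, ← Smix_ofFn]
  have h2 : ((List.ofFn fun j => (a j, a' j)).map Prod.fst) = List.ofFn a := by
    rw [List.map_ofFn]; rfl
  rw [h2]; rfl

end InfFreeAux


/-- The subalgebras are infinitesimally free w.r.t. (E,E') iff the upper triangular subalgebras are free w.r.t. Ẽ over B̃. -/
theorem inf_free_iff_tilde_free {A : Type*} [Ring A] [Algebra ℂ A]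
    (B : Subalgebra ℂ A) (E E' : A →ₗ[ℂ] A)
    (hE_mem : ∀ a, E a ∈ B) (hE'_mem : ∀ a, E' a ∈ B)
    (hE_id : ∀ b ∈ B, E b = b)
    (hE_bimod : ∀ b₁ ∈ B, ∀ b₂ ∈ B, ∀ a, E (b₁ * a * b₂) = b₁ * E a * b₂)
    (hE'_one : E' 1 = 0)
    (hE'_bimod : ∀ b₁ ∈ B, ∀ b₂ ∈ B, ∀ a, E' (b₁ * a * b₂) = b₁ * E' a * b₂)
    {n : ℕ} (𝒜 : Fin n → Subalgebra ℂ A) (h𝒜 : ∀ i, B ≤ 𝒜 i) :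
    InfinitesimallyFree E E' 𝒜 ↔ TildeFree E E' 𝒜 := by
  constructor
  · intro hIF m i hi a a' ha ha' hEt
    have hc : ∀ j, E (a j) = 0 := by
      intro j
      have := congrFun (congrFun (hEt j) 0) 0
      simpa [Et] using this
    have hc' : ∀ j, E (a' j) + E' (a j) = 0 := by
      intro j
      have := congrFun (congrFun (hEt j) 0) 1
      simpa [Et] using this
    obtain ⟨h1, h2⟩ := hIF m i hi a ha hc
    rw [InfFreeAux.prod_T_ofFn]
    have key : ∀ j : Fin (m+1),
        E (((List.ofFn a).take j).prod * a' j * ((List.ofFn a).drop (j+1)).prod)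
          + E (((List.ofFn a).take j).prod * E' (a j) * ((List.ofFn a).drop (j+1)).prod) = 0 := by
      intro j
      have hb : ∀ k, Function.update a j (a' j + E' (a j)) k ∈ 𝒜 (i k) := by
        intro k
        by_cases hk : k = j
        · subst hk
          simp only [Function.update_self]
          exact add_mem (ha' k) (h𝒜 _ (hE'_mem _))
        · simp only [Function.update_of_ne hk]
          exact ha k
      have hbc : ∀ k, E (Function.update a j (a' j + E' (a j)) k) = 0 := by
        intro k
        by_cases hk : k = j
        · subst hk
          simp only [Function.update_self, map_add]
          rw [hE_id _ (hE'_mem _)]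
          exact hc' k
        · simp only [Function.update_of_ne hk]
          exact hc k
      have h0 := (hIF m i hi _ hb hbc).1
      rw [InfFreeAux.prod_update, mul_add, add_mul, map_add] at h0
      exact h0
    have hsum : E (∑ j : Fin (m+1), ((List.ofFn a).take j).prod * a' j * ((List.ofFn a).drop (j+1)).prod)
        + E' (List.ofFn a).prod = 0 := by
      rw [map_sum, h2, ← Finset.sum_add_distrib]
      exact Finset.sum_eq_zero fun j _ => key j
    have hEtval : ∀ P S : A, Et E E' !![P, S; 0, P] = !![E P, E S + E' P; 0, E P] := by
      intro P S; simp [Et]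
    have z2 : (!![0, 0; 0, 0] : Matrix (Fin 2) (Fin 2) A) = 0 := by
      ext r c; fin_cases r <;> fin_cases c <;> rfl
    rw [hEtval, h1, hsum]
    simpa using z2
  · intro hTF m i hi a ha hc
    set a' : Fin (m+1) → A := fun j => -E' (a j) with ha'def
    have hEt0 : ∀ j, Et E E' !![a j, a' j; 0, a j] = 0 := by
      intro j
      ext r c
      fin_cases r <;> fin_cases c <;>
        simp [Et, hc j, ha'def, map_neg, hE_id _ (hE'_mem (a j))]
    have H := hTF m i hi a a' ha (fun j => neg_mem (h𝒜 (i j) (hE'_mem (a j)))) hEt0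
    rw [InfFreeAux.prod_T_ofFn] at H
    have h00 : E (List.ofFn a).prod = 0 := by
      have := congrFun (congrFun H 0) 0
      simpa [Et] using this
    refine ⟨h00, ?_⟩
    have h01 := congrFun (congrFun H 0) 1
    simp only [Et] at h01
    have h01' : E (∑ j : Fin (m+1), ((List.ofFn a).take j).prod * a' j * ((List.ofFn a).drop (j+1)).prod)
        + E' (List.ofFn a).prod = 0 := by
      simpa [Et] using h01
    rw [map_sum] at h01'
    have hterm : ∀ j : Fin (m+1),
        E (((List.ofFn a).take j).prod * a' j * ((List.ofFn a).drop (j+1)).prod)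
          = -E (((List.ofFn a).take j).prod * E' (a j) * ((List.ofFn a).drop (j+1)).prod) := by
      intro j
      rw [ha'def]
      simp [mul_neg, neg_mul]
    rw [Finset.sum_congr rfl (fun j _ => hterm j), Finset.sum_neg_distrib, neg_add_eq_zero] at h01'
    exact h01'.symm
end

section
/- In an operator-valued C*-probability space with infinitesimal structure, the Cauchy transform of the upper triangular element X = [[x,0],[0,x]] at B = [[b,c],[0,b]] equals [[G_x(b), G'_x(b)(c) + g_x(b)], [0, G_x(b)]], where G_x(b) = E[(b-x)⁻¹], g_x(b) = E'[(b-x)⁻¹], and G'_x(b)(c) = -E[(b-x)⁻¹ c (b-x)⁻¹]. -/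
/-- In a C*-operator-valued infinitesimal probability space, the Cauchy transform of
`X = [[x,0],[0,x]]` at `B = [[b,c],[0,b]]` equals
`[[G_x(b), G'_x(b)(c) + g_x(b)],[0, G_x(b)]]`, where `G_x(b) = E[(b-x)⁻¹]`,
`g_x(b) = E'[(b-x)⁻¹]` and `G'_x(b)(c) = -E[(b-x)⁻¹ c (b-x)⁻¹]`. -/
theorem Et_cauchy_transform {A : Type*} [NormedRing A] [StarRing A] [CStarRing A]
    [NormedAlgebra ℂ A] [CompleteSpace A] [StarModule ℂ A]
    (B : Subalgebra ℂ A) (E E' : A →ₗ[ℂ] A)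
    (hE_mem : ∀ a, E a ∈ B) (hE'_mem : ∀ a, E' a ∈ B)
    (hE_id : ∀ b ∈ B, E b = b)
    (hE_bimod : ∀ b₁ ∈ B, ∀ b₂ ∈ B, ∀ a, E (b₁ * a * b₂) = b₁ * E a * b₂)
    (hE'_one : E' 1 = 0)
    (hE'_bimod : ∀ b₁ ∈ B, ∀ b₂ ∈ B, ∀ a, E' (b₁ * a * b₂) = b₁ * E' a * b₂)
    (x b c : A) (hx : IsSelfAdjoint x) (hb : b ∈ B) (hc : c ∈ B)
    (hinv : IsUnit (b - x)) :
    Et E E' (Ring.inverse (!![b, c; 0, b] - !![x, 0; 0, x] : Matrix (Fin 2) (Fin 2) A))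
      = !![E (Ring.inverse (b - x)),
            -(E (Ring.inverse (b - x) * c * Ring.inverse (b - x))) +
              E' (Ring.inverse (b - x));
            0, E (Ring.inverse (b - x))] := by
  set r := Ring.inverse (b - x) with hr
  have h1 : (b - x) * r = 1 := Ring.mul_inverse_cancel _ hinv
  have h2 : r * (b - x) = 1 := Ring.inverse_mul_cancel _ hinv
  have hM : (!![b, c; 0, b] - !![x, 0; 0, x] : Matrix (Fin 2) (Fin 2) A)
      = !![b - x, c; 0, b - x] := by
    ext i j; fin_cases i <;> fin_cases j <;>
      simp [Matrix.sub_apply]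
  have hmul1 : (!![b - x, c; 0, b - x] : Matrix (Fin 2) (Fin 2) A) *
      !![r, -(r * c * r); 0, r] = 1 := by
    ext i j; fin_cases i <;> fin_cases j <;>
      simp [Matrix.mul_apply, Fin.sum_univ_two, Matrix.one_apply, h1, h2, mul_assoc]
    · rw [← mul_assoc, h1, one_mul, neg_add_cancel]
  have hmul2 : (!![r, -(r * c * r); 0, r] : Matrix (Fin 2) (Fin 2) A) *
      !![b - x, c; 0, b - x] = 1 := by
    ext i j; fin_cases i <;> fin_cases j <;>
      simp [Matrix.mul_apply, Fin.sum_univ_two, Matrix.one_apply, h1, h2, mul_assoc,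
        add_neg_cancel]
  have hinvM : Ring.inverse (!![b - x, c; 0, b - x] : Matrix (Fin 2) (Fin 2) A)
      = !![r, -(r * c * r); 0, r] := by
    exact Ring.inverse_unit
      (⟨!![b - x, c; 0, b - x], !![r, -(r * c * r); 0, r], hmul1, hmul2⟩ :
        (Matrix (Fin 2) (Fin 2) A)ˣ)
  rw [hM, hinvM]
  simp [Et, map_neg]
end

section
/- If a linear functional φ' on a unital C*-algebra is selfadjoint (φ'(a*) = conj(φ'(a))) and φ'(1) = 0, then φ' can be written as c(φ₁ - φ₂) for some real c ≥ 0 and states φ₁, φ₂ (positive unital linear functionals). -/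
namespace JordanDecompositionAux

open Complex

variable {M : Type*} [CStarAlgebra M] [Nontrivial M]

lemma norm_sa_add_im_sq (h : M) (hh : IsSelfAdjoint h) (t : ℝ) :
    ‖h + (t * I) • 1‖ ^ 2 ≤ ‖h‖ ^ 2 + t ^ 2 := by
  set c : ℂ := t * I with hc
  have hstar : star (h + c • 1) = h + (-c) • 1 := by
    simp [star_smul, hh.star_eq, hc, Complex.ext_iff]
  have hcomm : Commute h (c • 1) := (Commute.one_right h).smul_right c
  have hnormal : IsStarNormal (h + c • 1) := by
    constructor
    rw [Commute, SemiconjBy, hstar, neg_smul]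
    exact (((Commute.refl h).add_right hcomm).add_left
      ((hcomm.symm.neg_left).add_right ((Commute.refl (c • 1)).neg_left)))
  obtain ⟨z, hz, hznorm⟩ := spectrum.exists_nnnorm_eq_spectralRadius (a := h + c • 1)
  have hrad := IsStarNormal.spectralRadius_eq_nnnorm (h + c • 1)
  have hnn : ‖z‖ = ‖h + c • 1‖ := by
    have h2 := hznorm.trans hrad
    exact_mod_cast congrArg ENNReal.toReal h2
  have heq : (algebraMap ℂ M) c + h = h + c • 1 := by
    rw [Algebra.algebraMap_eq_smul_one]; exact add_comm _ _
  have hz' : z ∈ spectrum ℂ ((algebraMap ℂ M) c + h) := heq ▸ hz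
  rw [← spectrum.singleton_add_eq] at hz'
  obtain ⟨c', hc', w, hw, rfl⟩ := Set.mem_add.mp hz'
  rw [Set.mem_singleton_iff] at hc'
  subst hc'
  have hwim : w.im = 0 := hh.im_eq_zero_of_mem_spectrum hw
  have hwnorm : ‖w‖ ≤ ‖h‖ := spectrum.norm_le_norm_of_mem hw
  rw [← hnn]
  have hre : w.re ^ 2 ≤ ‖h‖ ^ 2 := by
    have h3 : |w.re| ≤ ‖w‖ := Complex.abs_re_le_norm w
    have h4 : ‖w‖ = ‖w‖ := rfl
    nlinarith [abs_nonneg w.re, norm_nonneg w, _root_.sq_abs w.re]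
  have hnormz : ‖c + w‖ ^ 2 = w.re ^ 2 + t ^ 2 := by
    rw [Complex.sq_norm, Complex.normSq_apply]
    simp [hc, hwim]
    ring
  linarith

/-- Quasi-state maps selfadjoint elements to reals. -/
lemma quasiState_im_eq_zero (ψ : M →L[ℂ] ℂ) (hψ : ∀ x, ‖ψ x‖ ≤ ‖x‖) (hψ1 : ψ 1 = 1)
    (h : M) (hh : IsSelfAdjoint h) : (ψ h).im = 0 := by
  by_contra hβ
  set β := (ψ h).im with hβdef
  set t : ℝ := (‖h‖ ^ 2 + 1 - (ψ h).re ^ 2 - β ^ 2) / (2 * β) with ht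
  have key : ‖ψ h + t * I‖ ^ 2 ≤ ‖h‖ ^ 2 + t ^ 2 := by
    have h1 : ψ (h + (t * I) • 1) = ψ h + t * I := by
      simp [map_add, map_smul, hψ1]
    calc ‖ψ h + t * I‖ ^ 2 = ‖ψ (h + (t * I) • 1)‖ ^ 2 := by rw [h1]
    _ ≤ ‖h + (t * I) • 1‖ ^ 2 := by
        have := hψ (h + (t * I) • 1)
        exact pow_le_pow_left₀ (norm_nonneg _) this 2
    _ ≤ ‖h‖ ^ 2 + t ^ 2 := norm_sa_add_im_sq h hh t
  have hexp : ‖ψ h + t * I‖ ^ 2 = (ψ h).re ^ 2 + (β + t) ^ 2 := by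
    rw [Complex.sq_norm, Complex.normSq_apply]
    simp
    ring
  rw [hexp] at key
  have h2bt : 2 * β * t = ‖h‖ ^ 2 + 1 - (ψ h).re ^ 2 - β ^ 2 := by
    rw [ht]; field_simp
  nlinarith [key]

/-- Quasi-states are positive. -/
lemma quasiState_re_nonneg (ψ : M →L[ℂ] ℂ) (hψ : ∀ x, ‖ψ x‖ ≤ ‖x‖) (hψ1 : ψ 1 = 1)
    (a : M) : 0 ≤ (ψ (star a * a)).re := by
  set x := star a * a with hx
  have hxsa : IsSelfAdjoint x := IsSelfAdjoint.star_mul_self a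
  set r : ℝ := ‖x‖ with hr
  -- ‖(r : ℂ) • 1 - x‖ ≤ r
  have hb : ‖(r : ℂ) • (1 : M) - x‖ ≤ r := by
    have hsa' : IsSelfAdjoint ((r : ℂ) • (1 : M) - x) := by
      have h1 : IsSelfAdjoint ((r : ℂ) • (1 : M)) := by
        rw [IsSelfAdjoint, star_smul]
        simp
      exact h1.sub hxsa
    obtain ⟨z, hz, hznorm⟩ := spectrum.exists_nnnorm_eq_spectralRadius (a := (r : ℂ) • (1 : M) - x)
    have hrad := hsa'.spectralRadius_eq_nnnorm
    have hnn : ‖z‖ = ‖(r : ℂ) • (1 : M) - x‖ := by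
      have h2 := hznorm.trans hrad
      exact_mod_cast congrArg ENNReal.toReal h2
    have heq : (algebraMap ℂ M) (r : ℂ) - x = (r : ℂ) • (1 : M) - x := by
      rw [Algebra.algebraMap_eq_smul_one]
    have hz' : z ∈ spectrum ℂ ((algebraMap ℂ M) (r : ℂ) - x) := heq ▸ hz
    rw [← spectrum.singleton_sub_eq] at hz'
    obtain ⟨c', hc', w, hw, rfl⟩ := Set.mem_sub.mp hz'
    rw [Set.mem_singleton_iff] at hc'
    subst hc'
    have hwim : w.im = 0 := hxsa.im_eq_zero_of_mem_spectrum hw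
    have hwre : 0 ≤ w.re := by
      have hmem : w.re ∈ spectrum ℝ x := by
        apply spectrum.of_algebraMap_mem ℂ
        have hwe : ((w.re : ℂ)) = w := by
          simp [Complex.ext_iff, hwim]
        simpa [hwe] using hw
      exact spectrum_star_mul_self_nonneg w.re hmem
    have hwle : w.re ≤ r := by
      have h3 : ‖w‖ ≤ ‖x‖ := spectrum.norm_le_norm_of_mem hw
      have h4 : |w.re| ≤ ‖w‖ := Complex.abs_re_le_norm w
      have h5 : ‖w‖ = ‖w‖ := rfl
      calc w.re ≤ |w.re| := le_abs_self _
      _ ≤ ‖x‖ := by rw [← h5] at h3; linarith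
    rw [← hnn]
    have hobs : ((r : ℂ) - w) = ((r - w.re : ℝ) : ℂ) := by
      simp [Complex.ext_iff, hwim]
    rw [hobs, Complex.norm_real, Real.norm_eq_abs, _root_.abs_of_nonneg (by linarith)]
    linarith
  have hψb : ‖ψ ((r : ℂ) • (1 : M) - x)‖ ≤ r := le_trans (hψ _) hb
  have hψx : ψ ((r : ℂ) • (1 : M) - x) = (r : ℂ) - ψ x := by
    simp [map_sub, map_smul, hψ1]
  have hre : |r - (ψ x).re| ≤ r := by
    have := hψb
    rw [hψx] at this
    calc |r - (ψ x).re| = |((r : ℂ) - ψ x).re| := by simp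
    _ ≤ ‖(r : ℂ) - ψ x‖ := Complex.abs_re_le_norm _
    _ ≤ r := this
  have := abs_le.mp hre
  linarith [this.2]

/-- Quasi-states are selfadjoint. -/
lemma quasiState_star (ψ : M →L[ℂ] ℂ) (hψ : ∀ x, ‖ψ x‖ ≤ ‖x‖) (hψ1 : ψ 1 = 1)
    (a : M) : ψ (star a) = starRingEnd ℂ (ψ a) := by
  have hcstar : star ((2 * I)⁻¹ : ℂ) = -(2 * I)⁻¹ := by simp [Complex.ext_iff]
  have hImul : I * ((2 * I)⁻¹ : ℂ) = (2 : ℂ)⁻¹ := by field_simp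
  set h : M := (2 : ℂ)⁻¹ • (a + star a) with hh
  set k : M := (2 * I)⁻¹ • (a - star a) with hk
  clear_value h k
  have hhsa : IsSelfAdjoint h := by
    rw [IsSelfAdjoint, hh, star_smul, star_add, star_star]
    rw [show star ((2 : ℂ)⁻¹) = (2 : ℂ)⁻¹ by simp [Complex.ext_iff]]
    rw [add_comm]
  have hksa : IsSelfAdjoint k := by
    rw [IsSelfAdjoint, hk, star_smul, star_sub, star_star, hcstar, neg_smul, ← smul_neg, neg_sub]
  have ha : a = h + I • k := by
    rw [hh, hk, smul_smul, hImul, ← smul_add]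
    have h2 : a + star a + (a - star a) = (2 : ℂ) • a := by rw [two_smul]; abel
    rw [h2, smul_smul]
    simp
  have hstara : star a = h - I • k := by
    rw [hh, hk, smul_smul, hImul, ← smul_sub]
    have h2 : a + star a - (a - star a) = (2 : ℂ) • star a := by rw [two_smul]; abel
    rw [h2, smul_smul]
    simp
  clear hh hk
  have hψh := quasiState_im_eq_zero ψ hψ hψ1 h hhsa
  have hψk := quasiState_im_eq_zero ψ hψ hψ1 k hksa
  have hconj1 : starRingEnd ℂ (ψ h) = ψ h := Complex.conj_eq_iff_im.mpr hψh
  have hconj2 : starRingEnd ℂ (ψ k) = ψ k := Complex.conj_eq_iff_im.mpr hψk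
  calc ψ (star a) = ψ h - I * ψ k := by rw [hstara, map_sub, map_smul]; rfl
  _ = starRingEnd ℂ (ψ h + I * ψ k) := by
      rw [map_add, map_mul, Complex.conj_I, hconj1, hconj2]; ring
  _ = starRingEnd ℂ (ψ a) := by
      congr 1
      rw [ha, map_add, map_smul]; rfl
set_option maxHeartbeats 1000000 in
lemma exists_state_eq_spectrum_point (b : M) (hb : IsSelfAdjoint b) {z : ℂ}
    (hz : z ∈ spectrum ℂ b) :
    ∃ ρ : M →L[ℂ] ℂ, (∀ x, ‖ρ x‖ ≤ ‖x‖) ∧ ρ 1 = 1 ∧ ρ b = z := by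
  haveI : IsStarNormal b := hb.isStarNormal
  haveI : Nontrivial (StarAlgebra.elemental ℂ b) := ⟨1, 0, one_ne_zero⟩
  obtain ⟨χ, hχ⟩ := (StarAlgebra.elemental.bijective_characterSpaceToSpectrum b).2 ⟨z, hz⟩
  have hχb : (χ ⟨b, StarAlgebra.elemental.self_mem ℂ b⟩ : ℂ) = z := congrArg Subtype.val hχ
  set p : Submodule ℂ M :=
    { carrier := (StarAlgebra.elemental ℂ b : Set M)
      add_mem' := fun hx hy => (StarAlgebra.elemental ℂ b).add_mem hx hy
      zero_mem' := (StarAlgebra.elemental ℂ b).zero_mem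
      smul_mem' := fun c x hx => (StarAlgebra.elemental ℂ b).smul_mem hx c } with hp
  set l : p →ₗ[ℂ] ℂ :=
    { toFun := fun x => χ ⟨(x : M), x.2⟩
      map_add' := fun x y => by rw [← map_add]; rfl
      map_smul' := fun c x => by rw [← map_smul]; rfl } with hl
  have hnorm_coe : ∀ y : StarAlgebra.elemental ℂ b, ‖y‖ = ‖(y : M)‖ := fun y => rfl
  have hlb : ∀ x : p, ‖l x‖ ≤ 1 * ‖(x : M)‖ := by
    intro x
    rw [one_mul]
    have h1 : ‖χ (⟨(x : M), x.2⟩ : StarAlgebra.elemental ℂ b)‖ ≤ ‖(⟨(x : M), x.2⟩ : StarAlgebra.elemental ℂ b)‖ :=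
      AlgHom.norm_apply_le_self χ _
    rw [hnorm_coe] at h1
    exact h1
  set f : p →L[ℂ] ℂ := l.mkContinuous 1 hlb with hf
  obtain ⟨g, hg, hgnorm⟩ := exists_extension_norm_eq p f
  have hfnorm : ‖f‖ ≤ 1 := l.mkContinuous_norm_le zero_le_one hlb
  have hgapp : ∀ x : p, g x = χ ⟨(x : M), x.2⟩ := fun x => hg x
  refine ⟨g, ?_, ?_, ?_⟩
  · intro x
    calc ‖g x‖ ≤ ‖g‖ * ‖x‖ := g.le_opNorm x
    _ ≤ 1 * ‖x‖ := by rw [hgnorm]; exact mul_le_mul_of_nonneg_right hfnorm (norm_nonneg x)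
    _ = ‖x‖ := one_mul _
  · have h2 := hgapp ⟨1, (StarAlgebra.elemental ℂ b).one_mem⟩
    rw [h2]
    exact map_one χ
  · have h3 := hgapp ⟨b, StarAlgebra.elemental.self_mem ℂ b⟩
    rw [h3]
    exact hχb

section Topology

variable (M) in
/-- The set of states, as a subset of the weak dual. -/
def stateSet : Set (WeakDual ℂ M) := {ψ | (∀ x, ‖ψ x‖ ≤ ‖x‖) ∧ ψ 1 = 1}

variable (M) in
/-- Jordan decomposition candidates with total mass at most `N`. -/
def KSet (N : ℝ) : Set (WeakDual ℂ M) :=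
  {k | ∃ l m : ℝ, ∃ ρ₁ ρ₂ : WeakDual ℂ M, 0 ≤ l ∧ 0 ≤ m ∧ l + m ≤ N ∧
    ρ₁ ∈ stateSet M ∧ ρ₂ ∈ stateSet M ∧ k = (l : ℂ) • ρ₁ - (m : ℂ) • ρ₂}

lemma isCompact_stateSet : IsCompact (stateSet M) := by
  apply WeakDual.isCompact_of_bounded_of_closed
  · apply Bornology.IsBounded.subset
      (Metric.isBounded_closedBall (x := (0 : StrongDual ℂ M)) (r := 1))
    rintro ψ ⟨h1, h2⟩
    rw [Metric.mem_closedBall, dist_zero_right]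
    exact ContinuousLinearMap.opNorm_le_bound _ zero_le_one (fun x => by rw [one_mul]; exact h1 x)
  · have h3 : stateSet M =
        (⋂ x : M, {ψ : WeakDual ℂ M | ‖ψ x‖ ≤ ‖x‖}) ∩ {ψ : WeakDual ℂ M | ψ 1 = 1} := by
      ext ψ; simp [stateSet, Set.mem_iInter]
    rw [h3]
    exact IsClosed.inter
      (isClosed_iInter fun x =>
        isClosed_le (WeakDual.eval_continuous x).norm continuous_const)
      (isClosed_eq (WeakDual.eval_continuous 1) continuous_const)

lemma isCompact_KSet (N : ℝ) : IsCompact (KSet M N) := by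
  set A : Set (ℝ × ℝ) := {q | 0 ≤ q.1 ∧ 0 ≤ q.2 ∧ q.1 + q.2 ≤ N} with hA
  have hAclosed : IsClosed A :=
    (isClosed_le continuous_const continuous_fst).inter
      ((isClosed_le continuous_const continuous_snd).inter
        (isClosed_le (continuous_fst.add continuous_snd) continuous_const))
  have hAcomp : IsCompact A := by
    apply (isCompact_Icc.prod (isCompact_Icc (a := (0:ℝ)) (b := N))).of_isClosed_subset hAclosed
    rintro ⟨x, y⟩ ⟨h1, h2, h3⟩
    exact ⟨Set.mem_Icc.mpr ⟨h1, by linarith⟩, Set.mem_Icc.mpr ⟨h2, by linarith⟩⟩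
  have hT : IsCompact (A ×ˢ (stateSet M ×ˢ stateSet M)) :=
    hAcomp.prod (isCompact_stateSet.prod isCompact_stateSet)
  have hmap : Continuous (fun p : (ℝ × ℝ) × WeakDual ℂ M × WeakDual ℂ M =>
      ((p.1.1 : ℂ) • p.2.1 - (p.1.2 : ℂ) • p.2.2 : WeakDual ℂ M)) := by
    apply WeakDual.continuous_of_continuous_eval
    intro x
    exact ((Complex.continuous_ofReal.comp (continuous_fst.comp continuous_fst)).mul
      ((WeakDual.eval_continuous x).comp (continuous_fst.comp continuous_snd))).sub
      ((Complex.continuous_ofReal.comp (continuous_snd.comp continuous_fst)).mul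
      ((WeakDual.eval_continuous x).comp (continuous_snd.comp continuous_snd)))
  have himg : KSet M N = (fun p : (ℝ × ℝ) × WeakDual ℂ M × WeakDual ℂ M =>
      ((p.1.1 : ℂ) • p.2.1 - (p.1.2 : ℂ) • p.2.2 : WeakDual ℂ M)) ''
      (A ×ˢ (stateSet M ×ˢ stateSet M)) := by
    ext k
    constructor
    · rintro ⟨l, m, ρ₁, ρ₂, hl, hm, hlm, hρ₁, hρ₂, rfl⟩
      exact ⟨((l, m), ρ₁, ρ₂), ⟨⟨hl, hm, hlm⟩, hρ₁, hρ₂⟩, rfl⟩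
    · rintro ⟨⟨⟨l, m⟩, ρ₁, ρ₂⟩, ⟨⟨hl, hm, hlm⟩, hρ₁, hρ₂⟩, rfl⟩
      exact ⟨l, m, ρ₁, ρ₂, hl, hm, hlm, hρ₁, hρ₂, rfl⟩
  rw [himg]
  exact hT.image hmap

lemma exists_state_combination (t s l l' : ℝ) (ht : 0 ≤ t) (hs : 0 ≤ s) (hl : 0 ≤ l)
    (hl' : 0 ≤ l') {ρ ρ' : WeakDual ℂ M} (hρ : ρ ∈ stateSet M) (hρ' : ρ' ∈ stateSet M) :
    ∃ ρ'' ∈ stateSet M,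
      (((t * l : ℝ)) : ℂ) • ρ + (((s * l' : ℝ)) : ℂ) • ρ' = (((t * l + s * l' : ℝ)) : ℂ) • ρ'' := by
  set L : ℝ := t * l + s * l' with hL
  by_cases hL0 : L = 0
  · have h1 : t * l = 0 := by nlinarith [mul_nonneg ht hl, mul_nonneg hs hl']
    have h2 : s * l' = 0 := by nlinarith [mul_nonneg ht hl, mul_nonneg hs hl']
    refine ⟨ρ, hρ, ?_⟩
    rw [h1, h2, hL0]
    simp
  · have hLpos : 0 < L := lt_of_le_of_ne (by nlinarith [mul_nonneg ht hl, mul_nonneg hs hl']) (Ne.symm hL0)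
    refine ⟨((L⁻¹ : ℝ) : ℂ) • ((((t * l : ℝ)) : ℂ) • ρ + (((s * l' : ℝ)) : ℂ) • ρ'), ⟨?_, ?_⟩, ?_⟩
    · intro x
      have hval : ((((L⁻¹ : ℝ)) : ℂ) • ((((t * l : ℝ)) : ℂ) • ρ + (((s * l' : ℝ)) : ℂ) • ρ')) x
          = ((L⁻¹ : ℝ) : ℂ) * (((t * l : ℝ) : ℂ) * ρ x + ((s * l' : ℝ) : ℂ) * ρ' x) := rfl
      rw [hval]
      calc ‖((L⁻¹ : ℝ) : ℂ) * (((t * l : ℝ) : ℂ) * ρ x + ((s * l' : ℝ) : ℂ) * ρ' x)‖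
          ≤ |L⁻¹| * ((t * l) * ‖x‖ + (s * l') * ‖x‖) := by
            rw [norm_mul, Complex.norm_real, Real.norm_eq_abs]
            apply mul_le_mul_of_nonneg_left _ (abs_nonneg _)
            calc ‖((t * l : ℝ) : ℂ) * ρ x + ((s * l' : ℝ) : ℂ) * ρ' x‖
                ≤ ‖((t * l : ℝ) : ℂ) * ρ x‖ + ‖((s * l' : ℝ) : ℂ) * ρ' x‖ := norm_add_le _ _
            _ ≤ (t * l) * ‖x‖ + (s * l') * ‖x‖ := by
                apply add_le_add
                · rw [norm_mul, Complex.norm_real, Real.norm_eq_abs,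
                    _root_.abs_of_nonneg (mul_nonneg ht hl)]
                  exact mul_le_mul_of_nonneg_left (hρ.1 x) (mul_nonneg ht hl)
                · rw [norm_mul, Complex.norm_real, Real.norm_eq_abs,
                    _root_.abs_of_nonneg (mul_nonneg hs hl')]
                  exact mul_le_mul_of_nonneg_left (hρ'.1 x) (mul_nonneg hs hl')
      _ = ‖x‖ := by
            rw [_root_.abs_of_nonneg (le_of_lt (inv_pos.mpr hLpos))]
            field_simp
            ring
    · have hval : ((((L⁻¹ : ℝ)) : ℂ) • ((((t * l : ℝ)) : ℂ) • ρ + (((s * l' : ℝ)) : ℂ) • ρ')) 1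
          = ((L⁻¹ : ℝ) : ℂ) * (((t * l : ℝ) : ℂ) * ρ 1 + ((s * l' : ℝ) : ℂ) * ρ' 1) := rfl
      rw [hval, hρ.2, hρ'.2, mul_one, mul_one]
      have hLC : ((L : ℝ) : ℂ) ≠ 0 := by exact_mod_cast hL0
      push_cast
      rw [show (t : ℂ) * l + s * l' = ((L : ℝ) : ℂ) by rw [hL]; push_cast; ring]
      field_simp
    · rw [smul_smul, ← Complex.ofReal_mul]
      rw [show L * L⁻¹ = 1 by field_simp]
      simp

end Topology

lemma isSelfAdjoint_sa_part (a : M) : IsSelfAdjoint ((2 : ℂ)⁻¹ • (a + star a)) := by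
  rw [IsSelfAdjoint, star_smul, star_add, star_star]
  rw [show star ((2 : ℂ)⁻¹) = (2 : ℂ)⁻¹ by simp [Complex.ext_iff]]
  rw [add_comm]

set_option maxHeartbeats 2000000 in
lemma exists_KSet_agree (N : ℝ) (hN : 0 ≤ N) (φ : WeakDual ℂ M)
    (hsa : ∀ a, φ (star a) = starRingEnd ℂ (φ a)) (hbnd : ∀ x, ‖φ x‖ ≤ N * ‖x‖) :
    ∃ k ∈ KSet M N, ∀ a, k a = φ a := by
  classical
  have hKc : IsCompact (KSet M N) := isCompact_KSet N
  -- selfadjointness of elements of KSet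
  have hKsa : ∀ k ∈ KSet M N, ∀ x, k (star x) = starRingEnd ℂ (k x) := by
    rintro k ⟨l, m, ρ₁, ρ₂, hl, hm, hlm, hρ₁, hρ₂, rfl⟩ x
    have h1 : ((l : ℂ) • ρ₁ - (m : ℂ) • ρ₂) (star x)
        = (l : ℂ) * ρ₁ (star x) - (m : ℂ) * ρ₂ (star x) := rfl
    have h2 : ((l : ℂ) • ρ₁ - (m : ℂ) • ρ₂) x = (l : ℂ) * ρ₁ x - (m : ℂ) * ρ₂ x := rfl
    rw [h1, h2, show ρ₁ (star x) = starRingEnd ℂ (ρ₁ x) from quasiState_star ρ₁ hρ₁.1 hρ₁.2 x,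
      show ρ₂ (star x) = starRingEnd ℂ (ρ₂ x) from quasiState_star ρ₂ hρ₂.1 hρ₂.2 x]
    rw [map_sub, map_mul, map_mul, Complex.conj_ofReal, Complex.conj_ofReal]
  -- the key finite-dimensional approximation step
  have claim : ∀ F : Finset M, ∃ k ∈ KSet M N, ∀ a ∈ F, k a = φ a := by
    intro F
    by_contra hcon
    push_neg at hcon
    -- the projection to ℂ^F
    set π : WeakDual ℂ M → (F → ℂ) := fun ψ => fun i => ψ (i : M) with hπ
    have hπcont : Continuous π := continuous_pi fun i => WeakDual.eval_continuous _
    set A : Set (F → ℂ) := π '' KSet M N with hA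
    have hAcomp : IsCompact A := hKc.image hπcont
    have hAconv : Convex ℝ A := by
      rintro y₁ ⟨k₁, hk₁, rfl⟩ y₂ ⟨k₂, hk₂, rfl⟩ t s ht hs hts
      obtain ⟨l₁, m₁, ρ₁, ρ₂, hl₁, hm₁, hlm₁, hρ₁, hρ₂, rfl⟩ := hk₁
      obtain ⟨l₂, m₂, σ₁, σ₂, hl₂, hm₂, hlm₂, hσ₁, hσ₂, rfl⟩ := hk₂
      obtain ⟨ρp, hρp, hEq1⟩ := exists_state_combination t s l₁ l₂ ht hs hl₁ hl₂ hρ₁ hσ₁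
      obtain ⟨ρm, hρm, hEq2⟩ := exists_state_combination t s m₁ m₂ ht hs hm₁ hm₂ hρ₂ hσ₂
      refine ⟨((t * l₁ + s * l₂ : ℝ) : ℂ) • ρp - ((t * m₁ + s * m₂ : ℝ) : ℂ) • ρm,
        ⟨t * l₁ + s * l₂, t * m₁ + s * m₂, ρp, ρm,
          by positivity, by positivity, by nlinarith, hρp, hρm, rfl⟩, ?_⟩
      funext i
      have e1 := congrFun (congrArg DFunLike.coe hEq1) (i : M)
      have e2 := congrFun (congrArg DFunLike.coe hEq2) (i : M)
      have e1' : ((t * l₁ : ℝ) : ℂ) * ρ₁ (i : M) + ((s * l₂ : ℝ) : ℂ) * σ₁ (i : M)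
          = ((t * l₁ + s * l₂ : ℝ) : ℂ) * ρp (i : M) := e1
      have e2' : ((t * m₁ : ℝ) : ℂ) * ρ₂ (i : M) + ((s * m₂ : ℝ) : ℂ) * σ₂ (i : M)
          = ((t * m₁ + s * m₂ : ℝ) : ℂ) * ρm (i : M) := e2
      show ((t * l₁ + s * l₂ : ℝ) : ℂ) * ρp (i : M) - ((t * m₁ + s * m₂ : ℝ) : ℂ) * ρm (i : M)
        = t • ((l₁ : ℂ) * ρ₁ (i : M) - (m₁ : ℂ) * ρ₂ (i : M))
          + s • ((l₂ : ℂ) * σ₁ (i : M) - (m₂ : ℂ) * σ₂ (i : M))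
      rw [← e1', ← e2']
      rw [Complex.real_smul, Complex.real_smul]
      push_cast
      ring
    have hπφ : π φ ∉ A := by
      rintro ⟨k, hkK, hkeq⟩
      obtain ⟨a, ha, hne⟩ := hcon k hkK
      exact hne (congrFun hkeq ⟨a, ha⟩)
    obtain ⟨u, r, hu1, hu2⟩ := geometric_hahn_banach_closed_point hAconv hAcomp.isClosed hπφ
    -- represent u by an element of M
    set c : F → ℂ := fun i => (u (Pi.single i 1) : ℂ) + (u (Pi.single i Complex.I) : ℝ) * I with hc
    have hurep : ∀ y : F → ℂ, u y = ∑ i, (starRingEnd ℂ (c i) * y i).re := by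
      intro y
      have hy : ∑ i, Pi.single i (y i) = y := Finset.univ_sum_single y
      conv_lhs => rw [← hy]
      rw [map_sum]
      congr 1
      funext i
      have hsingle : (Pi.single i (y i) : ↥F → ℂ) = (y i).re • (Pi.single i (1 : ℂ) : ↥F → ℂ)
          + (y i).im • (Pi.single i Complex.I : ↥F → ℂ) := by
        rw [← Pi.single_smul, ← Pi.single_smul, ← Pi.single_add]
        congr 1
        rw [Complex.real_smul, Complex.real_smul]
        simpa using Complex.re_add_im (y i)
      rw [hsingle, map_add, map_smul, map_smul, smul_eq_mul, smul_eq_mul]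
      have hconjc : starRingEnd ℂ (c i)
          = ((u (Pi.single i 1) : ℝ) : ℂ) - ((u (Pi.single i Complex.I) : ℝ) : ℂ) * I := by
        rw [hc]
        simp [Complex.ext_iff]
      rw [hconjc]
      simp only [Complex.sub_re, Complex.sub_im, Complex.mul_re, Complex.mul_im,
        Complex.ofReal_re, Complex.ofReal_im, Complex.I_re, Complex.I_im]
      ring
    set aelt : M := ∑ i : F, starRingEnd ℂ (c i) • (i : M) with haelt
    have heval : ∀ ψ : WeakDual ℂ M, u (π ψ) = (ψ aelt).re := by
      intro ψ
      rw [hurep]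
      rw [haelt, map_sum, Complex.re_sum]
      congr 1
      funext i
      rw [map_smul, smul_eq_mul]
    -- selfadjoint part of aelt
    set belt : M := (2 : ℂ)⁻¹ • (aelt + star aelt) with hbelt
    have hbsa : IsSelfAdjoint belt := isSelfAdjoint_sa_part aelt
    have hre_eq : ∀ ψ : WeakDual ℂ M, (∀ x, ψ (star x) = starRingEnd ℂ (ψ x)) →
        ψ belt = (((ψ aelt).re : ℝ) : ℂ) := by
      intro ψ hψs
      rw [hbelt, map_smul, map_add, hψs]
      rw [Complex.add_conj]
      rw [smul_eq_mul]
      push_cast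
      ring
    -- a norm-attaining state on belt
    obtain ⟨z, hzmem, hznorm⟩ := spectrum.exists_nnnorm_eq_spectralRadius (a := belt)
    have hznn : ‖z‖ = ‖belt‖ := by
      have h2 := hznorm.trans hbsa.spectralRadius_eq_nnnorm
      exact_mod_cast congrArg ENNReal.toReal h2
    have hzim : z.im = 0 := hbsa.im_eq_zero_of_mem_spectrum hzmem
    have habs : |z.re| = ‖belt‖ := by
      have hz' : z = ((z.re : ℝ) : ℂ) := Complex.ext rfl (by simp [hzim])
      rw [← hznn, hz', Complex.norm_real, Real.norm_eq_abs]
      simp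
    obtain ⟨ρ, hρb, hρ1, hρz⟩ := exists_state_eq_spectrum_point belt hbsa hzmem
    have hρS : (ρ : WeakDual ℂ M) ∈ stateSet M := ⟨hρb, hρ1⟩
    have hρsa := fun x => quasiState_star ρ hρb hρ1 x
    -- φ side of the separation
    have hφside : (φ aelt).re ≤ N * ‖belt‖ := by
      have h3 := hre_eq φ hsa
      have h4 : ‖φ belt‖ ≤ N * ‖belt‖ := hbnd belt
      rw [h3, Complex.norm_real, Real.norm_eq_abs] at h4
      calc (φ aelt).re ≤ |(φ aelt).re| := le_abs_self _
      _ ≤ N * ‖belt‖ := h4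
    -- K side: exhibit an element of KSet with value N * ‖belt‖ at aelt
    have hKside : ∃ k₀ ∈ KSet M N, (k₀ aelt).re = N * ‖belt‖ := by
      rcases le_or_gt 0 z.re with hsign | hsign
      · refine ⟨(N : ℂ) • (ρ : WeakDual ℂ M) - ((0 : ℝ) : ℂ) • (ρ : WeakDual ℂ M),
          ⟨N, 0, ρ, ρ, hN, le_refl 0, by linarith, hρS, hρS, rfl⟩, ?_⟩
        have h5 : ((N : ℂ) • (ρ : WeakDual ℂ M) - ((0 : ℝ) : ℂ) • (ρ : WeakDual ℂ M)) belt
            = (N : ℂ) * ρ belt := by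
          show (N : ℂ) * ρ belt - ((0 : ℝ) : ℂ) * ρ belt = (N : ℂ) * ρ belt
          push_cast; ring
        have h6 := hre_eq ((N : ℂ) • (ρ : WeakDual ℂ M) - ((0 : ℝ) : ℂ) • (ρ : WeakDual ℂ M))
          (hKsa _ ⟨N, 0, ρ, ρ, hN, le_refl 0, by linarith, hρS, hρS, rfl⟩)
        replace h6 := h5.symm.trans h6
        rw [hρz] at h6
        have h7 : ((N : ℝ) : ℂ) * z = (((N * z.re : ℝ)) : ℂ) := by
          simp [Complex.ext_iff, hzim]
        rw [h7] at h6
        have h8 := congrArg Complex.re h6.symm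
        simp only [Complex.ofReal_re] at h8
        rw [h8, ← habs, _root_.abs_of_nonneg hsign]
      · refine ⟨((0 : ℝ) : ℂ) • (ρ : WeakDual ℂ M) - (N : ℂ) • (ρ : WeakDual ℂ M),
          ⟨0, N, ρ, ρ, le_refl 0, hN, by linarith, hρS, hρS, rfl⟩, ?_⟩
        have h5 : (((0 : ℝ) : ℂ) • (ρ : WeakDual ℂ M) - (N : ℂ) • (ρ : WeakDual ℂ M)) belt
            = -((N : ℂ) * ρ belt) := by
          show ((0 : ℝ) : ℂ) * ρ belt - (N : ℂ) * ρ belt = -((N : ℂ) * ρ belt)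
          push_cast; ring
        have h6 := hre_eq (((0 : ℝ) : ℂ) • (ρ : WeakDual ℂ M) - (N : ℂ) • (ρ : WeakDual ℂ M))
          (hKsa _ ⟨0, N, ρ, ρ, le_refl 0, hN, by linarith, hρS, hρS, rfl⟩)
        replace h6 := h5.symm.trans h6
        rw [hρz] at h6
        have h7 : -(((N : ℝ) : ℂ) * z) = (((N * (-z.re) : ℝ)) : ℂ) := by
          simp [Complex.ext_iff, hzim]
        rw [h7] at h6
        have h8 := congrArg Complex.re h6.symm
        simp only [Complex.ofReal_re] at h8
        rw [h8, ← habs, abs_of_neg hsign]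
    obtain ⟨k₀, hk₀K, hk₀val⟩ := hKside
    have hlt1 : u (π k₀) < r := hu1 _ ⟨k₀, hk₀K, rfl⟩
    have hlt2 : r < u (π φ) := hu2
    rw [heval k₀, hk₀val] at hlt1
    rw [heval φ] at hlt2
    linarith
  -- compactness: finite agreement implies global agreement
  set C : Finset M → Set (WeakDual ℂ M) :=
    fun F => KSet M N ∩ {k | ∀ a ∈ F, k a = φ a} with hC
  have hCdir : Directed (· ⊇ ·) C := by
    intro F G
    refine ⟨F ∪ G, ?_, ?_⟩
    · rintro k ⟨hk1, hk2⟩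
      exact ⟨hk1, fun a ha => hk2 a (Finset.mem_union_left _ ha)⟩
    · rintro k ⟨hk1, hk2⟩
      exact ⟨hk1, fun a ha => hk2 a (Finset.mem_union_right _ ha)⟩
  have hright : ∀ F : Finset M, IsClosed {k : WeakDual ℂ M | ∀ a ∈ F, k a = φ a} := by
    intro F
    have h9 : {k : WeakDual ℂ M | ∀ a ∈ F, k a = φ a}
        = ⋂ a ∈ F, {k : WeakDual ℂ M | k a = φ a} := by
      ext k; simp
    rw [h9]
    exact isClosed_biInter fun a _ => isClosed_eq (WeakDual.eval_continuous a) continuous_const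
  have hCclosed : ∀ F, IsClosed (C F) := fun F => hKc.isClosed.inter (hright F)
  have hCcomp : ∀ F, IsCompact (C F) := fun F => hKc.inter_right (hright F)
  have hCne : ∀ F, (C F).Nonempty := by
    intro F
    obtain ⟨k, hkK, hkag⟩ := claim F
    exact ⟨k, hkK, hkag⟩
  obtain ⟨k, hk⟩ := IsCompact.nonempty_iInter_of_directed_nonempty_isCompact_isClosed
    C hCdir hCne hCcomp hCclosed
  have hkK : k ∈ KSet M N := (Set.mem_iInter.mp hk ∅).1
  exact ⟨k, hkK, fun a => (Set.mem_iInter.mp hk {a}).2 a (Finset.mem_singleton_self a)⟩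

end JordanDecompositionAux

open JordanDecompositionAux in
/-- A selfadjoint bounded linear functional `φ'` on a unital C*-algebra with `φ'(1) = 0`
can be written as `c(φ₁ - φ₂)` for some real `c ≥ 0` and states `φ₁, φ₂`. -/
theorem selfadjoint_functional_jordan_decomposition {M : Type*} [NormedRing M]
    [StarRing M] [CStarRing M] [NormedAlgebra ℂ M] [CompleteSpace M] [StarModule ℂ M]
    [Nontrivial M]
    (φ' : M →L[ℂ] ℂ) (hsa : ∀ a, φ' (star a) = starRingEnd ℂ (φ' a))
    (h1 : φ' 1 = 0) :
    ∃ (c : ℝ) (φ₁ φ₂ : M →L[ℂ] ℂ), 0 ≤ c ∧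
      φ₁ 1 = 1 ∧ φ₂ 1 = 1 ∧
      (∀ a, 0 ≤ (φ₁ (star a * a)).re ∧ (φ₁ (star a * a)).im = 0) ∧
      (∀ a, 0 ≤ (φ₂ (star a * a)).re ∧ (φ₂ (star a * a)).im = 0) ∧
      ∀ a, φ' a = c * (φ₁ a - φ₂ a) := by
  letI : CStarAlgebra M := { }
  obtain ⟨k, hkK, hkagree⟩ := exists_KSet_agree ‖φ'‖ (norm_nonneg φ')
    (show WeakDual ℂ M from φ') hsa (fun x => φ'.le_opNorm x)
  obtain ⟨l, m, ρ₁, ρ₂, hl, hm, hlm, hρ₁, hρ₂, rfl⟩ := hkK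
  have hk1 : (l : ℂ) * ρ₁ 1 - (m : ℂ) * ρ₂ 1 = φ' 1 := hkagree 1
  rw [hρ₁.2, hρ₂.2, h1, mul_one, mul_one] at hk1
  have hml : m = l := by
    have h2 : ((l : ℝ) : ℂ) = ((m : ℝ) : ℂ) := by
      rw [← sub_eq_zero]; exact hk1
    exact (Complex.ofReal_inj.mp h2).symm
  refine ⟨l, ρ₁, ρ₂, hl, hρ₁.2, hρ₂.2, ?_, ?_, ?_⟩
  · exact fun a => ⟨quasiState_re_nonneg ρ₁ hρ₁.1 hρ₁.2 a,
      quasiState_im_eq_zero ρ₁ hρ₁.1 hρ₁.2 _ (IsSelfAdjoint.star_mul_self a)⟩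
  · exact fun a => ⟨quasiState_re_nonneg ρ₂ hρ₂.1 hρ₂.2 a,
      quasiState_im_eq_zero ρ₂ hρ₂.1 hρ₂.2 _ (IsSelfAdjoint.star_mul_self a)⟩
  · intro a
    have h3 : (l : ℂ) * ρ₁ a - (m : ℂ) * ρ₂ a = φ' a := hkagree a
    rw [← h3, hml]
    exact (mul_sub (l : ℂ) (ρ₁ a) (ρ₂ a)).symm
end
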